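/- arXiv:1008.2738 — 2 statements merged into one kernel-verified Lean document; each statement's English description precedes it below -/
import Mathlib

section
/- The improper integral ∫_0^∞ Φ_1(2,t) · t^2 dt, where Φ_1(2,t) = 16 t^3 (5 t^4 - 3)/(1 + t^4)^3, converges and equals 6π. -/
open MeasureTheory Real

/-- Φ_1(2,t) = 16 t³ (5t⁴ - 3)/(1 + t⁴)³. -/
noncomputable def Phi12 (t : ℝ) : ℝ := 16 * t ^ 3 * (5 * t ^ 4 - 3) / (1 + t ^ 4) ^ 3

noncomputable def F1 (t : ℝ) : ℝ :=
  15 * Real.arctan (t ^ 2) + (-25 * t ^ 6 - 15 * t ^ 2) / (1 + t ^ 4) ^ 2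

noncomputable def F2 (t : ℝ) : ℝ :=
  3 * Real.arctan (t ^ 2) + (3 * t ^ 6 - 3 * t ^ 2) / (1 + t ^ 4) ^ 2

lemma denom_pos (t : ℝ) : (0:ℝ) < 1 + t ^ 4 := by positivity

lemma hasDerivAt_sq (t : ℝ) : HasDerivAt (fun x : ℝ => x ^ 2) (2 * t) t := by
  simpa using hasDerivAt_pow 2 t

lemma hasDerivAt_arctan_sq (t : ℝ) :
    HasDerivAt (fun x : ℝ => Real.arctan (x ^ 2)) (1 / (1 + (t ^ 2) ^ 2) * (2 * t)) t :=
  HasDerivAt.comp (h₂ := Real.arctan) t (Real.hasDerivAt_arctan (t ^ 2)) (hasDerivAt_sq t)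

lemma hasDerivAt_den (t : ℝ) :
    HasDerivAt (fun x : ℝ => (1 + x ^ 4) ^ 2) (2 * (1 + t ^ 4) ^ 1 * (4 * t ^ 3)) t := by
  have h4 : HasDerivAt (fun x : ℝ => 1 + x ^ 4) (4 * t ^ 3) t := by
    simpa using (hasDerivAt_pow 4 t).const_add 1
  exact h4.pow 2

lemma hasDerivAt_F1 (t : ℝ) :
    HasDerivAt F1 (80 * t ^ 9 / (1 + t ^ 4) ^ 3) t := by
  have hnum : HasDerivAt (fun x : ℝ => -25 * x ^ 6 - 15 * x ^ 2)
      (-25 * (6 * t ^ 5) - 15 * (2 * t)) t := by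
    have := ((hasDerivAt_pow 6 t).const_mul (-25 : ℝ)).sub
      ((hasDerivAt_pow 2 t).const_mul (15 : ℝ))
    simpa [mul_comm, mul_assoc, Pi.sub_def] using this
  have hden := hasDerivAt_den t
  have hd : ((1 + t ^ 4) ^ 2 : ℝ) ≠ 0 := by positivity
  have hfrac := hnum.div hden hd
  have hsum := ((hasDerivAt_arctan_sq t).const_mul (15 : ℝ)).add hfrac
  have h0 : (0:ℝ) < 1 + t ^ 4 := denom_pos t
  refine hsum.congr_deriv ?_
  field_simp
  ring

lemma hasDerivAt_F2 (t : ℝ) :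
    HasDerivAt F2 (48 * t ^ 5 / (1 + t ^ 4) ^ 3) t := by
  have hnum : HasDerivAt (fun x : ℝ => 3 * x ^ 6 - 3 * x ^ 2)
      (3 * (6 * t ^ 5) - 3 * (2 * t)) t := by
    have := ((hasDerivAt_pow 6 t).const_mul (3 : ℝ)).sub
      ((hasDerivAt_pow 2 t).const_mul (3 : ℝ))
    simpa [mul_comm, mul_assoc, Pi.sub_def] using this
  have hden := hasDerivAt_den t
  have hd : ((1 + t ^ 4) ^ 2 : ℝ) ≠ 0 := by positivity
  have hfrac := hnum.div hden hd
  have hsum := ((hasDerivAt_arctan_sq t).const_mul (3 : ℝ)).add hfrac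
  have h0 : (0:ℝ) < 1 + t ^ 4 := denom_pos t
  refine hsum.congr_deriv ?_
  field_simp
  ring

lemma rat_tendsto_zero (a b : ℝ) :
    Filter.Tendsto (fun t : ℝ => (a * t ^ 6 + b * t ^ 2) / (1 + t ^ 4) ^ 2)
      Filter.atTop (nhds 0) := by
  have h : ∀ᶠ t : ℝ in Filter.atTop,
      (a * t ^ 6 + b * t ^ 2) / (1 + t ^ 4) ^ 2
        = (a * t⁻¹ ^ 2 + b * t⁻¹ ^ 6) / ((t⁻¹ ^ 4 + 1) ^ 2) := by
    filter_upwards [Filter.eventually_gt_atTop (0:ℝ)] with t ht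
    have ht' : t ≠ 0 := ne_of_gt ht
    field_simp
  have hinv : Filter.Tendsto (fun t : ℝ => t⁻¹) Filter.atTop (nhds 0) :=
    tendsto_inv_atTop_zero
  have hmain : Filter.Tendsto
      (fun t : ℝ => (a * t⁻¹ ^ 2 + b * t⁻¹ ^ 6) / ((t⁻¹ ^ 4 + 1) ^ 2))
      Filter.atTop (nhds ((a * 0 ^ 2 + b * 0 ^ 6) / ((0 ^ 4 + 1) ^ 2))) := by
    apply Filter.Tendsto.div
    · exact (((hinv.pow 2).const_mul a).add ((hinv.pow 6).const_mul b))
    · exact ((hinv.pow 4).add_const 1).pow 2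
    · norm_num
  have hval : (a * (0:ℝ) ^ 2 + b * 0 ^ 6) / ((0 ^ 4 + 1) ^ 2) = 0 := by norm_num
  rw [hval] at hmain
  exact Filter.Tendsto.congr' (Filter.EventuallyEq.symm h) hmain

lemma arctan_sq_tendsto :
    Filter.Tendsto (fun t : ℝ => Real.arctan (t ^ 2)) Filter.atTop (nhds (π / 2)) := by
  have h1 : Filter.Tendsto (fun t : ℝ => t ^ 2) Filter.atTop Filter.atTop :=
    Filter.tendsto_pow_atTop (by norm_num)
  exact (Real.tendsto_arctan_atTop.mono_right nhdsWithin_le_nhds).comp h1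

lemma F1_tendsto : Filter.Tendsto F1 Filter.atTop (nhds (15 * (π / 2))) := by
  have := (arctan_sq_tendsto.const_mul (15:ℝ)).add (rat_tendsto_zero (-25) (-15))
  simpa [F1, sub_eq_add_neg] using this.congr (fun t => by unfold F1; ring_nf)

lemma F2_tendsto : Filter.Tendsto F2 Filter.atTop (nhds (3 * (π / 2))) := by
  have := (arctan_sq_tendsto.const_mul (3:ℝ)).add (rat_tendsto_zero 3 (-3))
  simpa [F2, sub_eq_add_neg] using this.congr (fun t => by unfold F2; ring_nf)

lemma F1_cont : ContinuousWithinAt F1 (Set.Ici 0) 0 := by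
  have : Continuous F1 := by
    apply Continuous.add
    · exact continuous_const.mul (Real.continuous_arctan.comp (continuous_pow 2))
    · exact Continuous.div (by continuity) (by continuity) (fun t => by positivity)
  exact this.continuousWithinAt

lemma F2_cont : ContinuousWithinAt F2 (Set.Ici 0) 0 := by
  have : Continuous F2 := by
    apply Continuous.add
    · exact continuous_const.mul (Real.continuous_arctan.comp (continuous_pow 2))
    · exact Continuous.div (by continuity) (by continuity) (fun t => by positivity)
  exact this.continuousWithinAt

theorem Phi12_integral :
    IntegrableOn (fun t => Phi12 t * t ^ 2) (Set.Ioi (0:ℝ)) ∧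
    (∫ t in Set.Ioi (0:ℝ), Phi12 t * t ^ 2) = 6 * π := by
  have hderiv1 : ∀ t ∈ Set.Ioi (0:ℝ), HasDerivAt F1 (80 * t ^ 9 / (1 + t ^ 4) ^ 3) t :=
    fun t _ => hasDerivAt_F1 t
  have hderiv2 : ∀ t ∈ Set.Ioi (0:ℝ), HasDerivAt F2 (48 * t ^ 5 / (1 + t ^ 4) ^ 3) t :=
    fun t _ => hasDerivAt_F2 t
  have hpos1 : ∀ t ∈ Set.Ioi (0:ℝ), 0 ≤ 80 * t ^ 9 / (1 + t ^ 4) ^ 3 :=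
    fun t ht => by have := ht.out; positivity
  have hpos2 : ∀ t ∈ Set.Ioi (0:ℝ), 0 ≤ 48 * t ^ 5 / (1 + t ^ 4) ^ 3 :=
    fun t ht => by have := ht.out; positivity
  have hi1 : IntegrableOn (fun t : ℝ => 80 * t ^ 9 / (1 + t ^ 4) ^ 3) (Set.Ioi 0) :=
    integrableOn_Ioi_deriv_of_nonneg F1_cont hderiv1 hpos1 F1_tendsto
  have hi2 : IntegrableOn (fun t : ℝ => 48 * t ^ 5 / (1 + t ^ 4) ^ 3) (Set.Ioi 0) :=
    integrableOn_Ioi_deriv_of_nonneg F2_cont hderiv2 hpos2 F2_tendsto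
  have he1 : (∫ t in Set.Ioi (0:ℝ), 80 * t ^ 9 / (1 + t ^ 4) ^ 3) = 15 * (π / 2) - F1 0 :=
    integral_Ioi_of_hasDerivAt_of_nonneg F1_cont hderiv1 hpos1 F1_tendsto
  have he2 : (∫ t in Set.Ioi (0:ℝ), 48 * t ^ 5 / (1 + t ^ 4) ^ 3) = 3 * (π / 2) - F2 0 :=
    integral_Ioi_of_hasDerivAt_of_nonneg F2_cont hderiv2 hpos2 F2_tendsto
  have heq : ∀ t : ℝ, Phi12 t * t ^ 2
      = 80 * t ^ 9 / (1 + t ^ 4) ^ 3 - 48 * t ^ 5 / (1 + t ^ 4) ^ 3 := by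
    intro t; unfold Phi12; ring
  constructor
  · rw [show (fun t : ℝ => Phi12 t * t ^ 2)
        = fun t : ℝ => 80 * t ^ 9 / (1 + t ^ 4) ^ 3 - 48 * t ^ 5 / (1 + t ^ 4) ^ 3
        from funext heq]
    exact hi1.sub hi2
  · rw [show (fun t : ℝ => Phi12 t * t ^ 2)
        = fun t : ℝ => 80 * t ^ 9 / (1 + t ^ 4) ^ 3 - 48 * t ^ 5 / (1 + t ^ 4) ^ 3
        from funext heq,
      integral_sub hi1 hi2, he1, he2]
    simp [F1, F2]
    ring
end

section
/- There exists a continuous function q : (0,∞) → ℝ with q(t) ≥ 0 for all t > 0 such that ∫_0^1 (∫_x^1 (1-y)/y dy) q(t·x) dx ≤ t for all t > 0, yet ∫_0^∞ q(t) ln(1 + t^{-4}) dt > 6π. In other words, Khabibullin's conjecture fails for n = 2, α = 2. -/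
open MeasureTheory intervalIntegral Real Set Filter Topology

noncomputable def KH.T : ℝ := (3/5 : ℝ) ^ ((1:ℝ)/4)

def KH.P (σ : ℝ) : ℝ := 1 - 12*σ + 40*σ^2 - 50*σ^3 + 21*σ^4

noncomputable def KH.Q (t : ℝ) : ℝ := if t ≤ KH.T then 12*t*(1 - KH.P (t/KH.T)) else 12*t

namespace KH

lemma hT0 : 0 < T := Real.rpow_pos_of_pos (by norm_num) _

lemma hT4 : T^4 = 3/5 := by
  rw [T, ← Real.rpow_natCast ((3/5:ℝ) ^ ((1:ℝ)/4)) 4, ← Real.rpow_mul (by norm_num)]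
  norm_num

lemma hT1 : T ≤ 1 := Real.rpow_le_one (by norm_num) (by norm_num) (by norm_num)

lemma P_one : P 1 = 0 := by norm_num [P]

lemma P_le_one {σ : ℝ} (h0 : 0 ≤ σ) (h1 : σ ≤ 1) : P σ ≤ 1 := by
  unfold P
  nlinarith [mul_nonneg h0 (sq_nonneg (1-σ)), mul_nonneg (mul_nonneg h0 h0) (sq_nonneg (1-σ)),
    sq_nonneg (σ*(1-σ)), mul_nonneg h0 (sub_nonneg.2 h1), sq_nonneg σ]

lemma P_ge_neg_one {σ : ℝ} (h0 : 0 ≤ σ) (h1 : σ ≤ 1) : -1 ≤ P σ := by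
  unfold P
  nlinarith [sq_nonneg (σ - 1/4), sq_nonneg (σ^2 - σ/2), mul_nonneg h0 (sq_nonneg (1-σ)),
    mul_nonneg (sub_nonneg.2 h1) (sq_nonneg σ), sq_nonneg (σ*(1-σ))]

lemma abs_P_le_one {σ : ℝ} (h0 : 0 ≤ σ) (h1 : σ ≤ 1) : |P σ| ≤ 1 :=
  abs_le.2 ⟨P_ge_neg_one h0 h1, P_le_one h0 h1⟩

lemma contP : Continuous P := by unfold P; continuity

lemma contQ : Continuous Q := by
  apply Continuous.if_le
  · exact (continuous_const.mul continuous_id).mul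
      (continuous_const.sub (contP.comp (continuous_id.div_const _)))
  · exact continuous_const.mul continuous_id
  · exact continuous_id
  · exact continuous_const
  · intro x hx
    simp only [hx, div_self hT0.ne', P_one]
    ring

lemma Q_nonneg {t : ℝ} (ht : 0 < t) : 0 ≤ Q t := by
  unfold Q
  split_ifs with h
  · have h0 : 0 ≤ t / T := le_of_lt (div_pos ht hT0)
    have h1 : t / T ≤ 1 := (div_le_one hT0).2 h
    have := P_le_one h0 h1
    nlinarith
  · nlinarith


set_option maxHeartbeats 1000000

lemma ftc_Ioc {F f : ℝ → ℝ} {a b : ℝ} (hab : a ≤ b) (hF : Continuous F) (hf : Continuous f)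
    (hd : ∀ x ∈ Ioo a b, HasDerivAt F (f x) x) : ∫ x in Ioc a b, f x = F b - F a := by
  rw [← intervalIntegral.integral_of_le hab]
  exact intervalIntegral.integral_eq_sub_of_hasDeriv_right_of_le hab hF.continuousOn
    (fun x hx => (hd x hx).hasDerivWithinAt) (hf.intervalIntegrable _ _)


/-- antiderivative of (x-1-log x) * x^(k+1) -/
noncomputable def W (k : ℕ) (x : ℝ) : ℝ :=
  x^(k+3)/((k:ℝ)+3) - x^(k+2)/((k:ℝ)+2) - x^(k+1)*(x*Real.log x)/((k:ℝ)+2)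
    + x^(k+2)/((k:ℝ)+2)^2

lemma contW (k : ℕ) : Continuous fun x : ℝ => (x - 1 - Real.log x) * x^(k+1) := by
  have h : (fun x : ℝ => (x - 1 - Real.log x) * x^(k+1))
      = fun x : ℝ => x^(k+2) - x^(k+1) - x^k*(x*Real.log x) := by
    funext x; ring
  rw [h]
  exact ((continuous_pow _).sub (continuous_pow _)).sub
    ((continuous_pow _).mul Real.continuous_mul_log)

lemma W_zero (k : ℕ) : W k 0 = 0 := by
  simp [W, Real.log_zero, zero_pow (by omega : k+3 ≠ 0), zero_pow (by omega : k+2 ≠ 0),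
    zero_pow (by omega : k+1 ≠ 0)]

lemma W_deriv (k : ℕ) {x : ℝ} (hx : 0 < x) :
    HasDerivAt (W k) ((x - 1 - Real.log x) * x^(k+1)) x := by
  have hk2 : ((k:ℝ)+2) ≠ 0 := by positivity
  have hk3 : ((k:ℝ)+3) ≠ 0 := by positivity
  have h1 := (hasDerivAt_pow (k+3) x).div_const ((k:ℝ)+3)
  have h2 := (hasDerivAt_pow (k+2) x).div_const ((k:ℝ)+2)
  have h3 := ((hasDerivAt_pow (k+1) x).mul (Real.hasDerivAt_mul_log hx.ne')).div_const ((k:ℝ)+2)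
  have h4 := (hasDerivAt_pow (k+2) x).div_const (((k:ℝ)+2)^2)
  have := ((h1.sub h2).sub h3).add h4
  refine this.congr_deriv ?_
  have e1 : k+3-1 = k+2 := by omega
  have e2 : k+2-1 = k+1 := by omega
  have e3 : k+1-1 = k := by omega
  rw [e1, e2, e3]
  push_cast
  field_simp
  ring

lemma W_int {a c : ℝ} (h0 : 0 ≤ a) (hac : a ≤ c) (k : ℕ) :
    ∫ x in Ioc a c, (x - 1 - Real.log x) * x^(k+1) = W k c - W k a := by
  refine ftc_Ioc hac ?_ (contW k) ?_
  · unfold W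
    have : Continuous fun x : ℝ => x^(k+1)*(x*Real.log x) :=
      (continuous_pow _).mul Real.continuous_mul_log
    fun_prop
  · intro x hx
    exact W_deriv k (lt_of_le_of_lt h0 hx.1)



lemma powint (j : ℕ) : ∫ t in Ioc (0:ℝ) T, t^j = T^(j+1)/((j:ℝ)+1) := by
  have h : ∫ t in Ioc (0:ℝ) T, t^j = (fun t : ℝ => t^(j+1)/((j:ℝ)+1)) T
      - (fun t : ℝ => t^(j+1)/((j:ℝ)+1)) 0 := by
    refine ftc_Ioc hT0.le ((continuous_pow _).div_const _) (continuous_pow j) ?_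
    intro x _
    have := (hasDerivAt_pow (j+1) x).div_const ((j:ℝ)+1)
    refine this.congr_deriv ?_
    have e : j+1-1 = j := by omega
    rw [e]; push_cast
    field_simp
  rw [h]
  simp [zero_pow (by omega : j+1 ≠ 0)]

/-- ∫_0^T P(t/T) t^j -/
lemma momval (j : ℕ) : ∫ t in Ioc (0:ℝ) T, P (t/T) * t^j
    = T^(j+1) * (1/((j:ℝ)+1) - 12/((j:ℝ)+2) + 40/((j:ℝ)+3) - 50/((j:ℝ)+4) + 21/((j:ℝ)+5)) := by
  set G : ℝ → ℝ := fun t => t^(j+1)/((j:ℝ)+1) - 12*t^(j+2)/(((j:ℝ)+2)*T)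
      + 40*t^(j+3)/(((j:ℝ)+3)*T^2) - 50*t^(j+4)/(((j:ℝ)+4)*T^3) + 21*t^(j+5)/(((j:ℝ)+5)*T^4)
    with hG
  have hj1 : ((j:ℝ)+1) ≠ 0 := by positivity
  have hj2 : ((j:ℝ)+2) ≠ 0 := by positivity
  have hj3 : ((j:ℝ)+3) ≠ 0 := by positivity
  have hj4 : ((j:ℝ)+4) ≠ 0 := by positivity
  have hj5 : ((j:ℝ)+5) ≠ 0 := by positivity
  have hT := hT0.ne'
  have h : ∫ t in Ioc (0:ℝ) T, P (t/T) * t^j = G T - G 0 := by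
    refine ftc_Ioc hT0.le (((((((continuous_pow _).div_const _).sub
      ((continuous_const.mul (continuous_pow _)).div_const _)).add
      ((continuous_const.mul (continuous_pow _)).div_const _)).sub
      ((continuous_const.mul (continuous_pow _)).div_const _)).add
      ((continuous_const.mul (continuous_pow _)).div_const _))) ((contP.comp (continuous_id.div_const _)).mul (continuous_pow j)) ?_
    intro x _
    have h1 := (hasDerivAt_pow (j+1) x).div_const ((j:ℝ)+1)
    have h2 := ((hasDerivAt_pow (j+2) x).const_mul 12).div_const (((j:ℝ)+2)*T)
    have h3 := ((hasDerivAt_pow (j+3) x).const_mul 40).div_const (((j:ℝ)+3)*T^2)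
    have h4 := ((hasDerivAt_pow (j+4) x).const_mul 50).div_const (((j:ℝ)+4)*T^3)
    have h5 := ((hasDerivAt_pow (j+5) x).const_mul 21).div_const (((j:ℝ)+5)*T^4)
    have := (((h1.sub h2).add h3).sub h4).add h5
    refine this.congr_deriv ?_
    have e1 : j+1-1 = j := by omega
    have e2 : j+2-1 = j+1 := by omega
    have e3 : j+3-1 = j+2 := by omega
    have e4 : j+4-1 = j+3 := by omega
    have e5 : j+5-1 = j+4 := by omega
    rw [e1, e2, e3, e4, e5]
    unfold P
    push_cast
    field_simp
    ring
  rw [h, hG]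
  simp only [zero_pow (by omega : j+1 ≠ 0), zero_pow (by omega : j+2 ≠ 0),
    zero_pow (by omega : j+3 ≠ 0), zero_pow (by omega : j+4 ≠ 0), zero_pow (by omega : j+5 ≠ 0)]
  field_simp
  ring




lemma cont_log4 : Continuous fun t : ℝ => Real.log (t^4+1) := by
  apply Continuous.log (by continuity)
  intro t; positivity

/-- ∫_0^T t * log(t^4+1) -/
lemma int1 : ∫ t in Ioc (0:ℝ) T, t * Real.log (t^4+1)
    = T^2/2 * Real.log (T^4+1) - T^2 + Real.arctan (T^2) := by
  have h := ftc_Ioc (F := fun t : ℝ => t^2/2 * Real.log (t^4+1) - t^2 + Real.arctan (t^2))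
    (f := fun t : ℝ => t * Real.log (t^4+1)) hT0.le
    ((((continuous_pow 2).div_const 2).mul cont_log4).sub (continuous_pow 2)
      |>.add (Real.continuous_arctan.comp (continuous_pow 2)))
    (continuous_id.mul cont_log4) ?_
  · rw [h]
    norm_num
  · intro x _
    have hx4 : x^4 + 1 ≠ 0 := by positivity
    have hlog : HasDerivAt (fun t : ℝ => Real.log (t^4+1)) ((4*x^3)/(x^4+1)) x := by
      have := ((hasDerivAt_pow 4 x).add_const 1).log hx4
      convert this using 1 <;> norm_num
    have h1 := ((hasDerivAt_pow 2 x).div_const 2).mul hlog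
    have h2 := hasDerivAt_pow 2 x
    have h3 : HasDerivAt (fun t : ℝ => Real.arctan (t^2)) ((2*x)/(1+(x^2)^2)) x := by
      have := (hasDerivAt_pow 2 x).arctan
      convert this using 1
      norm_num
      rw [div_eq_inv_mul]
    have := (h1.sub h2).add h3
    refine this.congr_deriv ?_
    have h14 : (1:ℝ) + (x^2)^2 ≠ 0 := by positivity
    field_simp
    ring

/-- ∫_0^T t * log t -/
lemma int2 : ∫ t in Ioc (0:ℝ) T, t * Real.log t = (T*(T*Real.log T))/2 - T^2/4 := by
  have h := ftc_Ioc (F := fun t : ℝ => (t*(t*Real.log t))/2 - t^2/4)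
    (f := fun t : ℝ => t * Real.log t) hT0.le
    (((continuous_id.mul Real.continuous_mul_log).div_const 2).sub
      ((continuous_pow 2).div_const 4))
    Real.continuous_mul_log ?_
  · rw [h]
    norm_num
  · intro x hx
    have h1 := ((hasDerivAt_id' (𝕜 := ℝ) (x := x)).mul (Real.hasDerivAt_mul_log hx.1.ne')).div_const 2
    have h2 := (hasDerivAt_pow 2 x).div_const 4
    have := h1.sub h2
    refine this.congr_deriv ?_
    norm_num
    ring

/-- ∫_0^T P(t/T) * (t * log t) = 0 -/
lemma int4 : ∫ t in Ioc (0:ℝ) T, P (t/T) * (t * Real.log t) = 0 := by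
  have hT := hT0.ne'
  have h := ftc_Ioc
    (F := fun t : ℝ => (t*(t*Real.log t))*(1/2 - 4*t/T + 10*t^2/T^2 - 10*t^3/T^3 + (7/2)*t^4/T^4)
      - (t^2/4 - (4/3)*t^3/T + (5/2)*t^4/T^2 - 2*t^5/T^3 + (7/12)*t^6/T^4))
    (f := fun t : ℝ => P (t/T) * (t * Real.log t)) hT0.le
    (((continuous_id.mul Real.continuous_mul_log).mul (by continuity)).sub (by continuity))
    ((contP.comp (continuous_id.div_const _)).mul Real.continuous_mul_log) ?_
  · rw [h]
    have e1 : (T*(T*Real.log T))*(1/2 - 4*T/T + 10*T^2/T^2 - 10*T^3/T^3 + (7/2)*T^4/T^4)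
        - (T^2/4 - (4/3)*T^3/T + (5/2)*T^4/T^2 - 2*T^5/T^3 + (7/12)*T^6/T^4) = 0 := by
      field_simp
      ring
    norm_num [e1]
  · intro x hx
    have hpoly : HasDerivAt (fun t : ℝ => 1/2 - 4*t/T + 10*t^2/T^2 - 10*t^3/T^3 + (7/2)*t^4/T^4)
        (-(4/T) + 20*x/T^2 - 30*x^2/T^3 + 14*x^3/T^4) x := by
      have h1 := ((hasDerivAt_id' (𝕜 := ℝ) (x := x)).const_mul (4:ℝ)).div_const T
      have d2 := ((hasDerivAt_pow 2 x).const_mul (10:ℝ)).div_const (T^2)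
      have d3 := ((hasDerivAt_pow 3 x).const_mul (10:ℝ)).div_const (T^3)
      have d4 := ((hasDerivAt_pow 4 x).const_mul (7/2:ℝ)).div_const (T^4)
      have := ((((hasDerivAt_const x (1/2:ℝ)).sub h1).add d2).sub d3).add d4
      refine this.congr_deriv ?_
      push_cast
      ring
    have hml := (hasDerivAt_id' (𝕜 := ℝ) (x := x)).mul (Real.hasDerivAt_mul_log hx.1.ne')
    have h1 := hml.mul hpoly
    have d2 := (hasDerivAt_pow 2 x).div_const 4
    have d3 := ((hasDerivAt_pow 3 x).const_mul (4/3:ℝ)).div_const T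
    have d4 := ((hasDerivAt_pow 4 x).const_mul (5/2:ℝ)).div_const (T^2)
    have d5 := ((hasDerivAt_pow 5 x).const_mul (2:ℝ)).div_const (T^3)
    have d6 := ((hasDerivAt_pow 6 x).const_mul (7/12:ℝ)).div_const (T^4)
    have := h1.sub ((((d2.sub d3).add d4).sub d5).add d6)
    refine this.congr_deriv ?_
    unfold P
    simp only [Pi.mul_apply]
    field_simp
    ring



noncomputable def Phi (t : ℝ) : ℝ :=
  6*t^2*Real.log (t^4+1) - 24*(t*(t*Real.log t)) + 12*Real.arctan (t^2)

lemma Phi_deriv {x : ℝ} (hx : 0 < x) :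
    HasDerivAt Phi (12*x*(Real.log (x^4+1) - 4*Real.log x)) x := by
  have hx4 : x^4 + 1 ≠ 0 := by positivity
  have hlog : HasDerivAt (fun t : ℝ => Real.log (t^4+1)) ((4*x^3)/(x^4+1)) x := by
    have := ((hasDerivAt_pow 4 x).add_const 1).log hx4
    convert this using 1 <;> norm_num
  have h1 := ((hasDerivAt_pow 2 x).const_mul (6:ℝ)).mul hlog
  have h2 := ((hasDerivAt_id' (𝕜 := ℝ) (x := x)).mul (Real.hasDerivAt_mul_log hx.ne')).const_mul (24:ℝ)
  have h3 := ((hasDerivAt_pow 2 x).arctan).const_mul (12:ℝ)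
  have := (h1.sub h2).add h3
  refine this.congr_deriv ?_
  have h14 : (1:ℝ) + (x^2)^2 ≠ 0 := by positivity
  push_cast
  field_simp
  ring

lemma Phi_tendsto : Tendsto Phi atTop (𝓝 (6*π)) := by
  have h1 : Tendsto (fun t : ℝ => 12*Real.arctan (t^2)) atTop (𝓝 (12*(π/2))) := by
    refine Tendsto.const_mul _ ?_
    refine ((Real.tendsto_arctan_atTop.mono_right nhdsWithin_le_nhds).comp ?_)
    exact tendsto_pow_atTop (by norm_num)
  have h2 : Tendsto (fun t : ℝ => 6*t^2*Real.log (t^4+1) - 24*(t*(t*Real.log t))) atTop (𝓝 0) := by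
    have heq : ∀ᶠ t in (atTop : Filter ℝ), 6*(t^2*Real.log (1+1/t^4))
        = 6*t^2*Real.log (t^4+1) - 24*(t*(t*Real.log t)) := by
      filter_upwards [eventually_gt_atTop (0:ℝ)] with t ht
      have h4 : t^4 ≠ 0 := by positivity
      have : (1:ℝ) + 1/t^4 = (t^4+1)/t^4 := by field_simp
      rw [this, Real.log_div (by positivity) h4, Real.log_pow]
      push_cast
      ring
    refine Tendsto.congr' heq ?_
    have hb : Tendsto (fun t : ℝ => 1/t^2) atTop (𝓝 0) := by
      simpa [Function.comp_def] using tendsto_inv_atTop_zero.comp (tendsto_pow_atTop (n := 2) (by norm_num))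
    have hsq : Tendsto (fun t : ℝ => t^2*Real.log (1+1/t^4)) atTop (𝓝 0) := by
      apply tendsto_of_tendsto_of_tendsto_of_le_of_le' tendsto_const_nhds hb
      · filter_upwards [eventually_gt_atTop (0:ℝ)] with t ht
        have : (0:ℝ) ≤ Real.log (1+1/t^4) := Real.log_nonneg (le_add_of_nonneg_right (by positivity))
        exact mul_nonneg (by positivity) this
      · filter_upwards [eventually_gt_atTop (0:ℝ)] with t ht
        have hlle : Real.log (1+1/t^4) ≤ 1/t^4 := by
          have := Real.log_le_sub_one_of_pos (show (0:ℝ) < 1+1/t^4 by positivity)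
          linarith
        have ht2 : (0:ℝ) < t^2 := by positivity
        calc t^2*Real.log (1+1/t^4) ≤ t^2*(1/t^4) := by
              exact mul_le_mul_of_nonneg_left hlle ht2.le
          _ = 1/t^2 := by field_simp
      -- done
    simpa using hsq.const_mul 6
  have := h2.add h1
  unfold Phi
  norm_num at this ⊢
  convert this using 2
  ring



lemma intOn {g : ℝ → ℝ} (hg : Continuous g) : IntegrableOn g (Ioc 0 T) :=
  (hg.integrableOn_Icc (a := 0) (b := T)).mono_set Ioc_subset_Icc_self

/-- pointwise bound -/
lemma ptbound {t : ℝ} (ht : t ∈ Ioc (0:ℝ) T) :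
    P (t/T) * (t * Real.log (t^4+1)) ≤
      P (t/T) * (t^5 - t^9/2 + t^13/3 - t^17/4 + t^21/5 - t^25/6 + t^29/7 - t^33/8)
        + (5/2) * t^37 := by
  obtain ⟨ht0, htT⟩ := ht
  have hy1 : t^4 ≤ 3/5 := by
    calc t^4 ≤ T^4 := pow_le_pow_left₀ ht0.le htT 4
      _ = 3/5 := hT4
  have hy0 : (0:ℝ) < t^4 := by positivity
  have habs : |(-(t^4))| < 1 := by rw [abs_neg, abs_of_pos hy0]; linarith
  have key := Real.abs_log_sub_add_sum_range_le habs 8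
  have hsum : (∑ i ∈ Finset.range 8, (-(t^4)) ^ (i + 1) / ((i:ℝ) + 1))
      = -(t^4 - t^8/2 + t^12/3 - t^16/4 + t^20/5 - t^24/6 + t^28/7 - t^32/8) := by
    simp [Finset.sum_range_succ]
    ring
  rw [hsum] at key
  have h1mx : (1:ℝ) - (-(t^4)) = 1 + t^4 := by ring
  rw [h1mx] at key
  have habs9 : |(-(t^4))| ^ (8 + 1) = t^36 := by
    rw [abs_neg, abs_of_pos hy0]
    norm_num
    ring
  rw [habs9] at key
  have hden : (2:ℝ)/5 ≤ 1 - |(-(t^4))| := by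
    rw [abs_neg, abs_of_pos hy0]; linarith
  -- |log(1+t^4) - S| ≤ t^36/(1 - t^4) ≤ (5/2) t^36
  set S : ℝ := t^4 - t^8/2 + t^12/3 - t^16/4 + t^20/5 - t^24/6 + t^28/7 - t^32/8 with hS
  have hrem : |Real.log (1+t^4) - S| ≤ (5/2)*t^36 := by
    have h36 : (0:ℝ) < t^36 := by positivity
    have hle : t^36 / (1 - |(-(t^4))|) ≤ (5/2)*t^36 := by
      rw [div_le_iff₀ (by linarith)]
      nlinarith [hden]
    calc |Real.log (1+t^4) - S| = |(-S) + Real.log (1+t^4)| := by rw [add_comm]; congr 1; ring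
      _ ≤ t^36 / (1 - |(-(t^4))|) := key
      _ ≤ (5/2)*t^36 := hle
  have hPabs : |P (t/T)| ≤ 1 :=
    abs_P_le_one (le_of_lt (div_pos ht0 hT0)) ((div_le_one hT0).2 htT)
  have hlog4 : Real.log (t^4+1) = Real.log (1+t^4) := by rw [add_comm]
  have hexp : P (t/T) * (t * Real.log (t^4+1))
      = P (t/T) * (t*S) + P (t/T) * t * (Real.log (1+t^4) - S) := by
    rw [hlog4]; ring
  have hb : P (t/T) * t * (Real.log (1+t^4) - S) ≤ (5/2)*t^37 := by
    calc P (t/T) * t * (Real.log (1+t^4) - S)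
        ≤ |P (t/T) * t * (Real.log (1+t^4) - S)| := le_abs_self _
      _ = |P (t/T)| * t * |Real.log (1+t^4) - S| := by
          rw [abs_mul, abs_mul, abs_of_pos ht0]
      _ ≤ 1 * t * ((5/2)*t^36) := by
          apply mul_le_mul (mul_le_mul_of_nonneg_right hPabs ht0.le) hrem (abs_nonneg _)
          positivity
      _ = (5/2)*t^37 := by ring
  have htS : P (t/T) * (t*S)
      = P (t/T) * (t^5 - t^9/2 + t^13/3 - t^17/4 + t^21/5 - t^25/6 + t^29/7 - t^33/8) := by
    rw [hS]; ring
  linarith [hexp, hb, htS.le, htS.ge]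

lemma A3bound : ∫ t in Ioc (0:ℝ) T, P (t/T) * (t * Real.log (t^4+1))
    ≤ T^2 * (-(1/2000)) := by
  have hmono : ∫ t in Ioc (0:ℝ) T, P (t/T) * (t * Real.log (t^4+1))
      ≤ ∫ t in Ioc (0:ℝ) T,
          (P (t/T) * (t^5 - t^9/2 + t^13/3 - t^17/4 + t^21/5 - t^25/6 + t^29/7 - t^33/8)
            + (5/2) * t^37) := by
    refine setIntegral_mono_on ?_ ?_ measurableSet_Ioc (fun t ht => ptbound ht)
    · exact intOn ((contP.comp (continuous_id.div_const _)).mul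
        (continuous_id.mul cont_log4))
    · apply intOn
      exact ((contP.comp (continuous_id.div_const _)).mul (by continuity)).add (by continuity)
  refine le_trans hmono ?_
  have hsplit : ∫ t in Ioc (0:ℝ) T,
      (P (t/T) * (t^5 - t^9/2 + t^13/3 - t^17/4 + t^21/5 - t^25/6 + t^29/7 - t^33/8)
        + (5/2) * t^37)
      = (∫ t in Ioc (0:ℝ) T, P (t/T) * t^5) - (1/2) * (∫ t in Ioc (0:ℝ) T, P (t/T) * t^9)
        + (1/3) * (∫ t in Ioc (0:ℝ) T, P (t/T) * t^13)
        - (1/4) * (∫ t in Ioc (0:ℝ) T, P (t/T) * t^17)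
        + (1/5) * (∫ t in Ioc (0:ℝ) T, P (t/T) * t^21)
        - (1/6) * (∫ t in Ioc (0:ℝ) T, P (t/T) * t^25)
        + (1/7) * (∫ t in Ioc (0:ℝ) T, P (t/T) * t^29)
        - (1/8) * (∫ t in Ioc (0:ℝ) T, P (t/T) * t^33)
        + (5/2) * (∫ t in Ioc (0:ℝ) T, t^37) := by
    have hc : ∀ j : ℕ, Continuous fun t : ℝ => P (t/T) * t^j := fun j =>
      (contP.comp (continuous_id.div_const _)).mul (continuous_pow j)
    have e : ∀ t : ℝ, P (t/T) * (t^5 - t^9/2 + t^13/3 - t^17/4 + t^21/5 - t^25/6 + t^29/7 - t^33/8)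
        + (5/2) * t^37
        = P (t/T) * t^5 - (1/2) * (P (t/T) * t^9) + (1/3) * (P (t/T) * t^13)
          - (1/4) * (P (t/T) * t^17) + (1/5) * (P (t/T) * t^21) - (1/6) * (P (t/T) * t^25)
          + (1/7) * (P (t/T) * t^29) - (1/8) * (P (t/T) * t^33) + (5/2) * t^37 := by
      intro t; ring
    simp_rw [e]
    rw [integral_add (by exact ((((((((intOn (hc 5)).sub ((intOn (hc 9)).const_mul _)).add
          ((intOn (hc 13)).const_mul _)).sub ((intOn (hc 17)).const_mul _)).add
          ((intOn (hc 21)).const_mul _)).sub ((intOn (hc 25)).const_mul _)).add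
          ((intOn (hc 29)).const_mul _)).sub ((intOn (hc 33)).const_mul _)))
        (((intOn (continuous_pow 37))).const_mul _),
      integral_sub (by exact (((((((intOn (hc 5)).sub ((intOn (hc 9)).const_mul _)).add
          ((intOn (hc 13)).const_mul _)).sub ((intOn (hc 17)).const_mul _)).add
          ((intOn (hc 21)).const_mul _)).sub ((intOn (hc 25)).const_mul _)).add
          ((intOn (hc 29)).const_mul _))) ((intOn (hc 33)).const_mul _),
      integral_add (by exact ((((((intOn (hc 5)).sub ((intOn (hc 9)).const_mul _)).add
          ((intOn (hc 13)).const_mul _)).sub ((intOn (hc 17)).const_mul _)).add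
          ((intOn (hc 21)).const_mul _)).sub ((intOn (hc 25)).const_mul _)))
        ((intOn (hc 29)).const_mul _),
      integral_sub (by exact (((((intOn (hc 5)).sub ((intOn (hc 9)).const_mul _)).add
          ((intOn (hc 13)).const_mul _)).sub ((intOn (hc 17)).const_mul _)).add
          ((intOn (hc 21)).const_mul _))) ((intOn (hc 25)).const_mul _),
      integral_add (by exact ((((intOn (hc 5)).sub ((intOn (hc 9)).const_mul _)).add
          ((intOn (hc 13)).const_mul _)).sub ((intOn (hc 17)).const_mul _)))
        ((intOn (hc 21)).const_mul _),
      integral_sub (by exact (((intOn (hc 5)).sub ((intOn (hc 9)).const_mul _)).add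
          ((intOn (hc 13)).const_mul _))) ((intOn (hc 17)).const_mul _),
      integral_add (by exact ((intOn (hc 5)).sub ((intOn (hc 9)).const_mul _)))
        ((intOn (hc 13)).const_mul _),
      integral_sub (intOn (hc 5)) ((intOn (hc 9)).const_mul _),
      MeasureTheory.integral_const_mul, MeasureTheory.integral_const_mul,
      MeasureTheory.integral_const_mul, MeasureTheory.integral_const_mul,
      MeasureTheory.integral_const_mul, MeasureTheory.integral_const_mul,
      MeasureTheory.integral_const_mul, MeasureTheory.integral_const_mul]
  rw [hsplit, momval 5, momval 9, momval 13, momval 17, momval 21, momval 25, momval 29,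
    momval 33, powint 37]
  have p6 : T^6 = (3/5)*T^2 := by rw [show T^6 = T^4*T^2 by ring, hT4]
  have p10 : T^10 = (3/5)^2*T^2 := by rw [show T^10 = (T^4)^2*T^2 by ring, hT4]
  have p14 : T^14 = (3/5)^3*T^2 := by rw [show T^14 = (T^4)^3*T^2 by ring, hT4]
  have p18 : T^18 = (3/5)^4*T^2 := by rw [show T^18 = (T^4)^4*T^2 by ring, hT4]
  have p22 : T^22 = (3/5)^5*T^2 := by rw [show T^22 = (T^4)^5*T^2 by ring, hT4]
  have p26 : T^26 = (3/5)^6*T^2 := by rw [show T^26 = (T^4)^6*T^2 by ring, hT4]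
  have p30 : T^30 = (3/5)^7*T^2 := by rw [show T^30 = (T^4)^7*T^2 by ring, hT4]
  have p34 : T^34 = (3/5)^8*T^2 := by rw [show T^34 = (T^4)^8*T^2 by ring, hT4]
  have p38 : T^38 = (3/5)^9*T^2 := by rw [show T^38 = (T^4)^9*T^2 by ring, hT4]
  rw [p6, p10, p14, p18, p22, p26, p30, p34, p38]
  have hT2 : (0:ℝ) < T^2 := pow_pos hT0 2
  rw [show ((5:ℕ):ℝ) = 5 by norm_num, show ((9:ℕ):ℝ) = 9 by norm_num,
    show ((13:ℕ):ℝ) = 13 by norm_num, show ((17:ℕ):ℝ) = 17 by norm_num,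
    show ((21:ℕ):ℝ) = 21 by norm_num, show ((25:ℕ):ℝ) = 25 by norm_num,
    show ((29:ℕ):ℝ) = 29 by norm_num, show ((33:ℕ):ℝ) = 33 by norm_num,
    show ((37:ℕ):ℝ) = 37 by norm_num]
  nlinarith [hT2]




lemma inner_eq {x : ℝ} (hx0 : 0 < x) (hx1 : x ≤ 1) :
    (∫ y in x..1, (1-y)/y) = x - 1 - Real.log x := by
  have huIcc : uIcc x 1 = Icc x 1 := uIcc_of_le hx1
  have hco : ∀ y ∈ uIcc x 1, (1-y)/y = 1/y - 1 := by
    intro y hy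
    rw [huIcc] at hy
    have : y ≠ 0 := (lt_of_lt_of_le hx0 hy.1).ne'
    field_simp
  rw [intervalIntegral.integral_congr hco]
  have h1 : IntervalIntegrable (fun y : ℝ => 1/y) volume x 1 := by
    apply ContinuousOn.intervalIntegrable
    intro y hy
    rw [huIcc] at hy
    exact (continuousAt_const.div continuousAt_id (lt_of_lt_of_le hx0 hy.1).ne').continuousWithinAt
  have h2 : IntervalIntegrable (fun _ : ℝ => (1:ℝ)) volume x 1 :=
    intervalIntegrable_const
  rw [intervalIntegral.integral_sub h1 h2, integral_one_div (by
      rw [huIcc]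
      intro h
      exact absurd h.1 (not_le.2 hx0)), intervalIntegral.integral_const]
  rw [Real.log_div one_ne_zero hx0.ne', Real.log_one, smul_eq_mul]
  ring

lemma hyp_le {t : ℝ} (ht : 0 < t) (htT : t ≤ T) :
    ∫ x in Ioc (0:ℝ) 1, (x - 1 - Real.log x) * Q (t*x) ≤ t := by
  set u := t/T with hu
  have hu0 : 0 < u := div_pos ht hT0
  have hu1 : u ≤ 1 := (div_le_one hT0).2 htT
  have hQeq : ∀ x ∈ Ioc (0:ℝ) 1, (x - 1 - Real.log x) * Q (t*x)
      = (144*t*u)*((x - 1 - Real.log x)*x^2) - (480*t*u^2)*((x - 1 - Real.log x)*x^3)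
        + (600*t*u^3)*((x - 1 - Real.log x)*x^4) - (252*t*u^4)*((x - 1 - Real.log x)*x^5) := by
    intro x hx
    have hxT : t*x ≤ T := le_trans (by nlinarith [hx.1, hx.2] : t*x ≤ t) htT
    have hdiv : t*x/T = u*x := by rw [hu]; ring
    rw [Q, if_pos hxT, hdiv]
    unfold P
    ring
  rw [setIntegral_congr_fun measurableSet_Ioc hQeq]
  have hint : ∀ k : ℕ, IntegrableOn (fun x => (x - 1 - Real.log x) * x^(k+1)) (Ioc (0:ℝ) 1) :=
    fun k => ((contW k).integrableOn_Icc (a := 0) (b := 1)).mono_set Ioc_subset_Icc_self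
  rw [integral_sub (by exact ((((hint 1).const_mul _).sub ((hint 2).const_mul _)).add
        ((hint 3).const_mul _))) ((hint 4).const_mul _),
    integral_add (by exact (((hint 1).const_mul _).sub ((hint 2).const_mul _)))
      ((hint 3).const_mul _),
    integral_sub ((hint 1).const_mul _) ((hint 2).const_mul _),
    MeasureTheory.integral_const_mul, MeasureTheory.integral_const_mul,
    MeasureTheory.integral_const_mul, MeasureTheory.integral_const_mul,
    W_int le_rfl zero_le_one 1, W_int le_rfl zero_le_one 2, W_int le_rfl zero_le_one 3,
    W_int le_rfl zero_le_one 4]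
  have hW1 : ∀ k : ℕ, W k 1 = 1/((k:ℝ)+3) - 1/((k:ℝ)+2) + 1/((k:ℝ)+2)^2 := by
    intro k
    simp [W, Real.log_one]
  have hW0 : ∀ k : ℕ, W k 0 = 0 := by
    intro k
    simp [W, Real.log_zero, zero_pow (by omega : k+3 ≠ 0), zero_pow (by omega : k+2 ≠ 0),
      zero_pow (by omega : k+1 ≠ 0)]
  rw [hW1 1, hW1 2, hW1 3, hW1 4, hW0 1, hW0 2, hW0 3, hW0 4]
  norm_num
  nlinarith [sq_nonneg ((1-u)^2), sq_nonneg (1-u), mul_pos ht (mul_pos hu0 hu0),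
    mul_pos ht hu0]
lemma hyp_gt {t : ℝ} (ht : 0 < t) (htT : T < t) :
    ∫ x in Ioc (0:ℝ) 1, (x - 1 - Real.log x) * Q (t*x) ≤ t := by
  set c := T/t with hc
  have hc0 : 0 < c := div_pos hT0 ht
  have hc1 : c < 1 := (div_lt_one ht).2 htT
  have hint : ∀ (k : ℕ) (s : Set ℝ), MeasurableSet s → s ⊆ Icc (0:ℝ) 1 →
      IntegrableOn (fun x => (x - 1 - Real.log x) * x^(k+1)) s := fun k s _ hs =>
    ((contW k).integrableOn_Icc (a := 0) (b := 1)).mono_set hs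
  -- split
  have hsplit : Ioc (0:ℝ) 1 = Ioc 0 c ∪ Ioc c 1 := (Ioc_union_Ioc_eq_Ioc hc0.le hc1.le).symm
  have hQc : ∀ x ∈ Ioc (0:ℝ) c, (x - 1 - Real.log x) * Q (t*x)
      = (144*t*(t/T))*((x - 1 - Real.log x)*x^2) - (480*t*(t/T)^2)*((x - 1 - Real.log x)*x^3)
        + (600*t*(t/T)^3)*((x - 1 - Real.log x)*x^4) - (252*t*(t/T)^4)*((x - 1 - Real.log x)*x^5) := by
    intro x hx
    have hxT : t*x ≤ T := by
      have := hx.2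
      rw [hc] at this
      calc t*x ≤ t*(T/t) := by nlinarith
        _ = T := by field_simp
    have hdiv : t*x/T = (t/T)*x := by ring
    rw [Q, if_pos hxT, hdiv]
    unfold P
    ring
  have hQ1 : ∀ x ∈ Ioc c 1, (x - 1 - Real.log x) * Q (t*x)
      = (12*t)*((x - 1 - Real.log x)*x^(0+1)) := by
    intro x hx
    have hxT : ¬ (t*x ≤ T) := by
      rw [not_le]
      have hcx : c < x := hx.1
      calc T = t*c := by rw [hc]; field_simp
        _ < t*x := by nlinarith
    rw [Q, if_neg hxT]
    ring
  have hIc : IntegrableOn (fun x => (x - 1 - Real.log x) * Q (t*x)) (Ioc 0 c) := by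
    apply IntegrableOn.congr_fun _ (fun x hx => (hQc x hx).symm) measurableSet_Ioc
    have hsub : Ioc (0:ℝ) c ⊆ Icc 0 1 := fun x hx => ⟨hx.1.le, le_trans hx.2 hc1.le⟩
    exact ((((hint 1 _ measurableSet_Ioc hsub).const_mul _).sub
      ((hint 2 _ measurableSet_Ioc hsub).const_mul _)).add
      ((hint 3 _ measurableSet_Ioc hsub).const_mul _)).sub
      ((hint 4 _ measurableSet_Ioc hsub).const_mul _)
  have hI1 : IntegrableOn (fun x => (x - 1 - Real.log x) * Q (t*x)) (Ioc c 1) := by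
    apply IntegrableOn.congr_fun _ (fun x hx => (hQ1 x hx).symm) measurableSet_Ioc
    have hsub : Ioc c 1 ⊆ Icc (0:ℝ) 1 := fun x hx => ⟨le_trans hc0.le hx.1.le, hx.2⟩
    exact (hint 0 _ measurableSet_Ioc hsub).const_mul _
  rw [hsplit, setIntegral_union (Ioc_disjoint_Ioc_of_le le_rfl) measurableSet_Ioc hIc hI1,
    setIntegral_congr_fun measurableSet_Ioc hQc, setIntegral_congr_fun measurableSet_Ioc hQ1]
  have hsub : Ioc (0:ℝ) c ⊆ Icc 0 1 := fun x hx => ⟨hx.1.le, le_trans hx.2 hc1.le⟩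
  rw [integral_sub (by exact ((((hint 1 _ measurableSet_Ioc hsub).const_mul _).sub
        ((hint 2 _ measurableSet_Ioc hsub).const_mul _)).add
        ((hint 3 _ measurableSet_Ioc hsub).const_mul _)))
      ((hint 4 _ measurableSet_Ioc hsub).const_mul _),
    integral_add (by exact (((hint 1 _ measurableSet_Ioc hsub).const_mul _).sub
        ((hint 2 _ measurableSet_Ioc hsub).const_mul _)))
      ((hint 3 _ measurableSet_Ioc hsub).const_mul _),
    integral_sub ((hint 1 _ measurableSet_Ioc hsub).const_mul _)
      ((hint 2 _ measurableSet_Ioc hsub).const_mul _),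
    MeasureTheory.integral_const_mul, MeasureTheory.integral_const_mul,
    MeasureTheory.integral_const_mul, MeasureTheory.integral_const_mul,
    MeasureTheory.integral_const_mul,
    W_int le_rfl hc0.le 1, W_int le_rfl hc0.le 2, W_int le_rfl hc0.le 3, W_int le_rfl hc0.le 4,
    W_int hc0.le hc1.le 0]
  have hW0 : ∀ k : ℕ, W k 0 = 0 := by
    intro k
    simp [W, Real.log_zero, zero_pow (by omega : k+3 ≠ 0), zero_pow (by omega : k+2 ≠ 0),
      zero_pow (by omega : k+1 ≠ 0)]
  have hW1 : ∀ k : ℕ, W k 1 = 1/((k:ℝ)+3) - 1/((k:ℝ)+2) + 1/((k:ℝ)+2)^2 := by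
    intro k
    simp [W, Real.log_one]
  rw [hW0 1, hW0 2, hW0 3, hW0 4, hW1 0]
  unfold W
  push_cast
  norm_num
  apply le_of_eq
  have hT_eq : T = c*t := by rw [hc]; field_simp
  have hc0' : c ≠ 0 := hc0.ne'
  have ht' : t ≠ 0 := ht.ne'
  rw [hT_eq]
  field_simp
  ring


lemma log_split {t : ℝ} (ht : 0 < t) :
    Real.log (1 + 1/t^4) = Real.log (t^4+1) - 4*Real.log t := by
  have h4 : t^4 ≠ 0 := by positivity
  have : (1:ℝ) + 1/t^4 = (t^4+1)/t^4 := by field_simp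
  rw [this, Real.log_div (by positivity) h4, Real.log_pow]
  push_cast
  ring

lemma contPhi : Continuous Phi := by
  unfold Phi
  refine (((continuous_const.mul (continuous_pow 2)).mul cont_log4).sub
    (continuous_const.mul (continuous_id.mul Real.continuous_mul_log))).add
    (continuous_const.mul (Real.continuous_arctan.comp (continuous_pow 2)))

lemma deriv_nonneg {x : ℝ} (hx : T < x) : 0 ≤ 12*x*(Real.log (x^4+1) - 4*Real.log x) := by
  have hx0 : 0 < x := lt_trans hT0 hx
  have h1 : Real.log (x^4) ≤ Real.log (x^4+1) :=
    Real.log_le_log (by positivity) (by linarith)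
  rw [Real.log_pow] at h1
  push_cast at h1
  have : 0 ≤ Real.log (x^4+1) - 4*Real.log x := by linarith
  positivity

lemma piece2 : (∫ t in Ioi T, Q t * Real.log (1 + 1/t^4)) = 6*π - Phi T ∧
    IntegrableOn (fun t => Q t * Real.log (1 + 1/t^4)) (Ioi T) := by
  have hEq : EqOn (fun t : ℝ => 12*t*(Real.log (t^4+1) - 4*Real.log t))
      (fun t => Q t * Real.log (1 + 1/t^4)) (Ioi T) := by
    intro x hx
    have hx0 : 0 < x := lt_trans hT0 hx
    simp only
    rw [log_split hx0, Q, if_neg (not_le.2 hx)]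
  have hderiv : ∀ x ∈ Ioi T, HasDerivAt Phi (12*x*(Real.log (x^4+1) - 4*Real.log x)) x :=
    fun x hx => Phi_deriv (lt_trans hT0 hx)
  have hpos : ∀ x ∈ Ioi T, 0 ≤ 12*x*(Real.log (x^4+1) - 4*Real.log x) :=
    fun x hx => deriv_nonneg hx
  have hcont : ContinuousWithinAt Phi (Ici T) T := contPhi.continuousWithinAt
  constructor
  · rw [← setIntegral_congr_fun measurableSet_Ioi hEq]
    exact integral_Ioi_of_hasDerivAt_of_nonneg hcont hderiv hpos Phi_tendsto
  · exact (integrableOn_Ioi_deriv_of_nonneg hcont hderiv hpos Phi_tendsto).congr_fun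
      hEq measurableSet_Ioi

lemma piece1 : (∫ t in Ioc (0:ℝ) T, Q t * Real.log (1 + 1/t^4))
      = Phi T - 12 * (∫ t in Ioc (0:ℝ) T, P (t/T) * (t * Real.log (t^4+1))) ∧
    IntegrableOn (fun t => Q t * Real.log (1 + 1/t^4)) (Ioc (0:ℝ) T) := by
  have hEq : EqOn (fun t : ℝ => 12*(t * Real.log (t^4+1)) - 48*(t*Real.log t)
      - 12*(P (t/T) * (t * Real.log (t^4+1))) + 48*(P (t/T) * (t*Real.log t)))
      (fun t => Q t * Real.log (1 + 1/t^4)) (Ioc (0:ℝ) T) := by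
    intro x hx
    simp only
    rw [log_split hx.1, Q, if_pos hx.2]
    ring
  have h1 : IntegrableOn (fun t : ℝ => t * Real.log (t^4+1)) (Ioc (0:ℝ) T) :=
    intOn (continuous_id.mul cont_log4)
  have h2 : IntegrableOn (fun t : ℝ => t * Real.log t) (Ioc (0:ℝ) T) :=
    intOn Real.continuous_mul_log
  have h3 : IntegrableOn (fun t : ℝ => P (t/T) * (t * Real.log (t^4+1))) (Ioc (0:ℝ) T) :=
    intOn ((contP.comp (continuous_id.div_const _)).mul (continuous_id.mul cont_log4))
  have h4 : IntegrableOn (fun t : ℝ => P (t/T) * (t * Real.log t)) (Ioc (0:ℝ) T) :=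
    intOn ((contP.comp (continuous_id.div_const _)).mul Real.continuous_mul_log)
  constructor
  · rw [← setIntegral_congr_fun measurableSet_Ioc hEq]
    rw [integral_add (by exact (((h1.const_mul _).sub (h2.const_mul _)).sub (h3.const_mul _)))
        (h4.const_mul _),
      integral_sub (by exact ((h1.const_mul _).sub (h2.const_mul _))) (h3.const_mul _),
      integral_sub (h1.const_mul _) (h2.const_mul _),
      MeasureTheory.integral_const_mul, MeasureTheory.integral_const_mul,
      MeasureTheory.integral_const_mul, MeasureTheory.integral_const_mul,
      int1, int2, int4]
    unfold Phi
    ring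
  · exact IntegrableOn.congr_fun (by exact ((((h1.const_mul _).sub (h2.const_mul _)).sub
      (h3.const_mul _)).add (h4.const_mul _))) hEq measurableSet_Ioc

lemma conclusion : 6 * π < ∫ t in Ioi (0:ℝ), Q t * Real.log (1 + 1/t^4) := by
  have hsplit : Ioi (0:ℝ) = Ioc 0 T ∪ Ioi T := (Ioc_union_Ioi_eq_Ioi hT0.le).symm
  obtain ⟨h1v, h1i⟩ := piece1
  obtain ⟨h2v, h2i⟩ := piece2
  rw [hsplit, setIntegral_union Ioc_disjoint_Ioi_same measurableSet_Ioi h1i h2i, h1v, h2v]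
  have hA3 := A3bound
  have hT2 : (0:ℝ) < T^2 := pow_pos hT0 2
  nlinarith

end KH

theorem khabibullin_counterexample :
    ∃ q : ℝ → ℝ, ContinuousOn q (Ioi 0) ∧ (∀ t > (0:ℝ), 0 ≤ q t) ∧
      (∀ t > (0:ℝ),
        (∫ x in (0:ℝ)..1, (∫ y in x..1, (1 - y) / y) * q (t * x)) ≤ t) ∧
      6 * π < ∫ t in Ioi (0:ℝ), q t * Real.log (1 + 1 / t ^ 4) := by
  refine ⟨KH.Q, KH.contQ.continuousOn, fun t ht => KH.Q_nonneg ht, fun t ht => ?_, ?_⟩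
  · rw [intervalIntegral.integral_of_le zero_le_one]
    have hcongr : Set.EqOn (fun x : ℝ => (∫ y in x..1, (1-y)/y) * KH.Q (t*x))
        (fun x => (x - 1 - Real.log x) * KH.Q (t*x)) (Ioc 0 1) := fun x hx => by
      simp only
      rw [KH.inner_eq hx.1 hx.2]
    rw [MeasureTheory.setIntegral_congr_fun measurableSet_Ioc hcongr]
    rcases le_or_gt t KH.T with h | h
    · exact KH.hyp_le ht h
    · exact KH.hyp_gt ht h
  · have := KH.conclusion
    convert this using 2
end
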